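/- (Loop Lemma) Let 𝒱 be a finite type with distinguished distinct elements S and D. Let ξ : Finset (𝒱 ⊕ 𝒱) → ℝ be submodular and let h : 𝒱 → ℝ satisfy ξ(left-copy of A) = ∑_{v ∈ A} h(v) for every finite A ⊆ 𝒱; define ψ as below. Let V_1, …, V_l be pairwise distinct subsets of 𝒱 ∖ {S}, each containing D. Then ψ(V_1, V_2) + ψ(V_2, V_3) + ⋯ + ψ(V_{l−1}, V_l) + ψ(V_l, V_1) ≥ ∑_{i=1}^{l} ψ(Ṽ_i, Ṽ_i), where Ṽ_k is the derived family of (V_1, …, V_l). -/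

import Mathlib

/-- For a family of finite sets `V 0, …, V (l-1)` of `α`, the derived set
`Ṽ_k = ⋃_{ {i₁,…,i_k} ⊆ {1,…,l} } V_{i₁} ∩ ⋯ ∩ V_{i_k}`, the union ranging over all
`k`-element index subsets. -/
def tildeSet {α : Type*} [DecidableEq α] {l : ℕ} (V : Fin l → Finset α) (k : ℕ) : Finset α :=
  ((Finset.univ : Finset (Fin l)).powersetCard k).sup fun s =>
    if h : s.Nonempty then s.inf' h V else ∅

section Aux

variable {α : Type*} [DecidableEq α]

lemma mem_tildeSet {l : ℕ} {V : Fin l → Finset α} {k : ℕ} {v : α} :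
    v ∈ tildeSet V k ↔ 1 ≤ k ∧ k ≤ (Finset.univ.filter fun i => v ∈ V i).card := by
  constructor
  · intro hv
    rw [tildeSet, Finset.mem_sup] at hv
    obtain ⟨s, hs, hvs⟩ := hv
    rw [Finset.mem_powersetCard_univ] at hs
    split_ifs at hvs with hne
    · rw [Finset.mem_inf' hne] at hvs
      have hsub : s ⊆ Finset.univ.filter fun i => v ∈ V i := fun i hi =>
        Finset.mem_filter.mpr ⟨Finset.mem_univ i, hvs i hi⟩
      have h1 := Finset.card_le_card hsub
      have h2 : 0 < s.card := Finset.card_pos.mpr hne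
      omega
    · exact absurd hvs (Finset.notMem_empty v)
  · rintro ⟨hk1, hk2⟩
    obtain ⟨s, hsub, hcard⟩ := Finset.exists_subset_card_eq hk2
    rw [tildeSet, Finset.mem_sup]
    refine ⟨s, Finset.mem_powersetCard_univ.mpr hcard, ?_⟩
    have hne : s.Nonempty := Finset.card_pos.mp (by omega)
    rw [dif_pos hne, Finset.mem_inf' hne]
    exact fun i hi => (Finset.mem_filter.mp (hsub hi)).2

lemma tildeSet_congr_count {l : ℕ} {V W : Fin l → Finset α}
    (hc : ∀ v, (Finset.univ.filter fun i => v ∈ V i).card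
      = (Finset.univ.filter fun i => v ∈ W i).card) :
    tildeSet V = tildeSet W := by
  funext k; ext v; rw [mem_tildeSet, mem_tildeSet, hc]

lemma sum_update_two {M : Type*} [AddCommMonoid M] {l : ℕ} (f : Fin l → M) {i j : Fin l}
    (hij : i ≠ j) (a b : M) :
    (∑ k, Function.update (Function.update f i a) j b k) + (f i + f j)
      = (∑ k, f k) + (a + b) := by
  classical
  have hi : i ∈ Finset.univ \ {j} := by simp [hij]
  rw [Finset.sum_update_of_mem (Finset.mem_univ j),
    Finset.sum_update_of_mem hi]
  rw [show (∑ k, f k) = f j + ∑ x ∈ Finset.univ \ {j}, f x by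
      rw [← Finset.sum_update_of_mem (Finset.mem_univ j) f (f j)]
      congr 1; ext x; by_cases hx : x = j <;> simp [hx, Function.update],
    show (∑ x ∈ Finset.univ \ {j}, f x) = f i + ∑ x ∈ (Finset.univ \ {j}) \ {i}, f x by
      rw [← Finset.sum_update_of_mem hi f (f i)]
      apply Finset.sum_congr rfl; intro x _
      by_cases hx : x = i <;> simp [hx, Function.update]]
  abel

end Aux

section Pairs

variable {𝒱 : Type*} [Fintype 𝒱] [DecidableEq 𝒱]

private def PChain {l : ℕ} (P : Fin l → Finset 𝒱 × Finset 𝒱) : Prop :=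
  ∀ i j, ((P i).1 ⊆ (P j).1 ∧ (P i).2 ⊆ (P j).2) ∨ ((P j).1 ⊆ (P i).1 ∧ (P j).2 ⊆ (P i).2)

private lemma pot_le {l : ℕ} (P : Fin l → Finset 𝒱 × Finset 𝒱) :
    (∑ i, ((P i).1.card + (P i).2.card) ^ 2) ≤ l * (2 * Fintype.card 𝒱) ^ 2 := by
  calc (∑ i, ((P i).1.card + (P i).2.card) ^ 2)
      ≤ ∑ _i : Fin l, (2 * Fintype.card 𝒱) ^ 2 := by
        apply Finset.sum_le_sum
        intro i _
        have h1 := (P i).1.card_le_univ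
        have h2 := (P i).2.card_le_univ
        have : (P i).1.card + (P i).2.card ≤ 2 * Fintype.card 𝒱 := by
          omega
        exact Nat.pow_le_pow_left this 2
    _ = l * (2 * Fintype.card 𝒱) ^ 2 := by simp [Finset.sum_const, mul_comm]

/-- Chain case: when the pairs form a chain, the tilde-sum equals the pair sum. -/
private lemma chain_case (ψ : Finset 𝒱 → Finset 𝒱 → ℝ) {l : ℕ}
    (P : Fin l → Finset 𝒱 × Finset 𝒱) (hch : PChain P) :
    ∑ k ∈ Finset.Icc 1 l, ψ (tildeSet (fun i => (P i).1) k) (tildeSet (fun i => (P i).2) k)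
      = ∑ i, ψ (P i).1 (P i).2 := by
  classical
  set g : Fin l → ℕ := fun i => (P i).1.card + (P i).2.card with hg
  set e : Equiv.Perm (Fin l) := Fin.revPerm.trans (Tuple.sort g) with he
  have hmono : ∀ {k k' : Fin l}, k ≤ k' →
      (P (e k')).1 ⊆ (P (e k)).1 ∧ (P (e k')).2 ⊆ (P (e k)).2 := by
    intro k k' hkk
    have hgle : g (e k') ≤ g (e k) := by
      have := Tuple.monotone_sort g (show k'.rev ≤ k.rev from Fin.rev_le_rev.mpr hkk)
      simpa [he, Fin.revPerm] using this
    rcases hch (e k') (e k) with hc | hc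
    · exact hc
    · have h1 := Finset.card_le_card hc.1
      have h2 := Finset.card_le_card hc.2
      have e1 : (P (e k)).1 = (P (e k')).1 :=
        Finset.eq_of_subset_of_card_le hc.1 (by simp only [hg] at hgle; omega)
      have e2 : (P (e k)).2 = (P (e k')).2 :=
        Finset.eq_of_subset_of_card_le hc.2 (by simp only [hg] at hgle; omega)
      rw [e1, e2]
      exact ⟨subset_rfl, subset_rfl⟩
  -- counts through the permutation
  have hcount : ∀ (W : Fin l → Finset 𝒱) (v : 𝒱),
      (Finset.univ.filter fun i => v ∈ W i).card
        = (Finset.univ.filter fun j => v ∈ W (e j)).card := by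
    intro W v
    exact (Finset.card_equiv e (by intro j; simp)).symm
  -- the tilde sets of a chain are the sorted sets
  have htilde : ∀ (W : Fin l → Finset 𝒱), (∀ {k k' : Fin l}, k ≤ k' → W (e k') ⊆ W (e k)) →
      ∀ k : Fin l, tildeSet W ((k : ℕ) + 1) = W (e k) := by
    intro W hmW k
    ext v
    rw [mem_tildeSet, hcount W v]
    constructor
    · rintro ⟨-, hle⟩
      by_contra hv
      have hsub : (Finset.univ.filter fun j => v ∈ W (e j)) ⊆ Finset.Iio k := by
        intro c hc
        refine Finset.mem_Iio.mpr (lt_of_not_ge fun hkc => hv ?_)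
        exact hmW hkc (Finset.mem_filter.mp hc).2
      have hcard := Finset.card_le_card hsub
      rw [Fin.card_Iio] at hcard
      omega
    · intro hv
      refine ⟨by omega, ?_⟩
      have hsub : Finset.Iic k ⊆ Finset.univ.filter fun j => v ∈ W (e j) :=
        fun c hc => Finset.mem_filter.mpr ⟨Finset.mem_univ c, hmW (Finset.mem_Iic.mp hc) hv⟩
      have hcard := Finset.card_le_card hsub
      rw [Fin.card_Iic] at hcard
      omega
  have himg : Finset.Icc 1 l = (Finset.range l).image (· + 1) := by
    ext x
    simp only [Finset.mem_Icc, Finset.mem_image, Finset.mem_range]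
    constructor
    · rintro ⟨h1, h2⟩; exact ⟨x - 1, by omega, by omega⟩
    · rintro ⟨c, hc, rfl⟩; omega
  rw [himg, Finset.sum_image (by intro a _ b _ hab; beta_reduce at hab; omega), Finset.sum_range]
  rw [← Equiv.sum_comp e (fun i => ψ (P i).1 (P i).2)]
  apply Finset.sum_congr rfl
  intro k _
  rw [htilde _ (fun {k k'} hkk => (hmono hkk).1) k,
    htilde _ (fun {k k'} hkk => (hmono hkk).2) k]

/-- Descent: a non-chain admits a merge that strictly increases the potential,
preserves counts, and does not increase the `ψ`-sum. -/
private lemma descent (ψ : Finset 𝒱 → Finset 𝒱 → ℝ)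
    (hmerge : ∀ A B A' B' : Finset 𝒱,
      ψ (A ∪ A') (B ∪ B') + ψ (A ∩ A') (B ∩ B') ≤ ψ A B + ψ A' B')
    {l : ℕ} (P : Fin l → Finset 𝒱 × Finset 𝒱) (hch : ¬ PChain P) :
    ∃ P' : Fin l → Finset 𝒱 × Finset 𝒱,
      (∀ v, (Finset.univ.filter fun i => v ∈ (P' i).1).card
        = (Finset.univ.filter fun i => v ∈ (P i).1).card)
      ∧ (∀ v, (Finset.univ.filter fun i => v ∈ (P' i).2).card
        = (Finset.univ.filter fun i => v ∈ (P i).2).card)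
      ∧ (∑ i, ((P i).1.card + (P i).2.card) ^ 2) + 1
          ≤ (∑ i, ((P' i).1.card + (P' i).2.card) ^ 2)
      ∧ (∑ i, ψ (P' i).1 (P' i).2) ≤ ∑ i, ψ (P i).1 (P i).2 := by
  classical
  rw [PChain] at hch
  push_neg at hch
  obtain ⟨i, j, hij1, hij2⟩ := hch
  have hij : i ≠ j := by rintro rfl; exact hij1 subset_rfl subset_rfl
  set a : Finset 𝒱 × Finset 𝒱 := ((P i).1 ∪ (P j).1, (P i).2 ∪ (P j).2) with ha
  set b : Finset 𝒱 × Finset 𝒱 := ((P i).1 ∩ (P j).1, (P i).2 ∩ (P j).2) with hb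
  set P' := Function.update (Function.update P i a) j b with hP'
  have hPkpt : ∀ {M : Type} (G : Finset 𝒱 × Finset 𝒱 → M) (k : Fin l),
      G (P' k) = Function.update (Function.update (fun k => G (P k)) i (G a)) j (G b) k := by
    intro M G k
    by_cases hk : k = j
    · simp [hP', hk, Function.update]
    · by_cases hk' : k = i <;> simp [hP', hk, hk', hij, Function.update]
  have key : ∀ {M : Type} [AddCommMonoid M] (G : Finset 𝒱 × Finset 𝒱 → M),
      (∑ k, G (P' k)) + (G (P i) + G (P j)) = (∑ k, G (P k)) + (G a + G b) := by
    intro M _ G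
    rw [Finset.sum_congr rfl fun k _ => hPkpt G k]
    exact sum_update_two (fun k => G (P k)) hij (G a) (G b)
  refine ⟨P', ?_, ?_, ?_, ?_⟩
  · intro v
    rw [Finset.card_filter, Finset.card_filter]
    have h1 : (∑ k, if v ∈ (P' k).1 then (1:ℕ) else 0)
        + ((if v ∈ (P i).1 then 1 else 0) + (if v ∈ (P j).1 then 1 else 0))
        = (∑ k, if v ∈ (P k).1 then 1 else 0)
          + ((if v ∈ a.1 then 1 else 0) + (if v ∈ b.1 then 1 else 0)) :=
      key fun p => if v ∈ p.1 then 1 else 0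
    have hab : (if v ∈ a.1 then 1 else 0) + (if v ∈ b.1 then 1 else 0)
        = (if v ∈ (P i).1 then 1 else 0) + (if v ∈ (P j).1 then (1:ℕ) else 0) := by
      by_cases h1 : v ∈ (P i).1 <;> by_cases h2 : v ∈ (P j).1 <;>
        simp [ha, hb, h1, h2]
    omega
  · intro v
    rw [Finset.card_filter, Finset.card_filter]
    have h1 : (∑ k, if v ∈ (P' k).2 then (1:ℕ) else 0)
        + ((if v ∈ (P i).2 then 1 else 0) + (if v ∈ (P j).2 then 1 else 0))
        = (∑ k, if v ∈ (P k).2 then 1 else 0)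
          + ((if v ∈ a.2 then 1 else 0) + (if v ∈ b.2 then 1 else 0)) :=
      key fun p => if v ∈ p.2 then 1 else 0
    have hab : (if v ∈ a.2 then 1 else 0) + (if v ∈ b.2 then 1 else 0)
        = (if v ∈ (P i).2 then 1 else 0) + (if v ∈ (P j).2 then (1:ℕ) else 0) := by
      by_cases h1 : v ∈ (P i).2 <;> by_cases h2 : v ∈ (P j).2 <;>
        simp [ha, hb, h1, h2]
    omega
  · -- potential increases
    have hsum : (∑ k, ((P' k).1.card + (P' k).2.card) ^ 2)
        + (((P i).1.card + (P i).2.card) ^ 2 + ((P j).1.card + (P j).2.card) ^ 2)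
        = (∑ k, ((P k).1.card + (P k).2.card) ^ 2)
          + ((a.1.card + a.2.card) ^ 2 + (b.1.card + b.2.card) ^ 2) :=
      key fun p => (p.1.card + p.2.card) ^ 2
    have hun : a.1.card + b.1.card = (P i).1.card + (P j).1.card :=
      Finset.card_union_add_card_inter _ _
    have hun2 : a.2.card + b.2.card = (P i).2.card + (P j).2.card :=
      Finset.card_union_add_card_inter _ _
    have hgt1 : (P i).1.card + (P i).2.card + 1 ≤ a.1.card + a.2.card := by
      have h1 : (P i).1.card ≤ a.1.card := Finset.card_le_card Finset.subset_union_left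
      have h2 : (P i).2.card ≤ a.2.card := Finset.card_le_card Finset.subset_union_left
      rcases Nat.lt_or_ge ((P i).1.card + (P i).2.card) (a.1.card + a.2.card) with hlt | hge
      · omega
      · exfalso
        have e1 : (P i).1 = a.1 :=
          Finset.eq_of_subset_of_card_le Finset.subset_union_left (by omega)
        have e2 : (P i).2 = a.2 :=
          Finset.eq_of_subset_of_card_le Finset.subset_union_left (by omega)
        have s1 : (P j).1 ⊆ (P i).1 := by rw [e1]; exact Finset.subset_union_right
        have s2 : (P j).2 ⊆ (P i).2 := by rw [e2]; exact Finset.subset_union_right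
        exact hij2 s1 s2
    have hgt2 : (P j).1.card + (P j).2.card + 1 ≤ a.1.card + a.2.card := by
      have h1 : (P j).1.card ≤ a.1.card := Finset.card_le_card Finset.subset_union_right
      have h2 : (P j).2.card ≤ a.2.card := Finset.card_le_card Finset.subset_union_right
      rcases Nat.lt_or_ge ((P j).1.card + (P j).2.card) (a.1.card + a.2.card) with hlt | hge
      · omega
      · exfalso
        have e1 : (P j).1 = a.1 :=
          Finset.eq_of_subset_of_card_le Finset.subset_union_right (by omega)
        have e2 : (P j).2 = a.2 :=
          Finset.eq_of_subset_of_card_le Finset.subset_union_right (by omega)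
        have s1 : (P i).1 ⊆ (P j).1 := by rw [e1]; exact Finset.subset_union_left
        have s2 : (P i).2 ⊆ (P j).2 := by rw [e2]; exact Finset.subset_union_left
        exact hij1 s1 s2
    have hineq : ((P i).1.card + (P i).2.card) ^ 2 + ((P j).1.card + (P j).2.card) ^ 2 + 1
        ≤ (a.1.card + a.2.card) ^ 2 + (b.1.card + b.2.card) ^ 2 := by
      have huv : (a.1.card + a.2.card) + (b.1.card + b.2.card)
          = ((P i).1.card + (P i).2.card) + ((P j).1.card + (P j).2.card) := by omega
      nlinarith [hgt1, hgt2, huv]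
    omega
  · have hsum : (∑ k, ψ (P' k).1 (P' k).2)
        + (ψ (P i).1 (P i).2 + ψ (P j).1 (P j).2)
        = (∑ k, ψ (P k).1 (P k).2) + (ψ a.1 a.2 + ψ b.1 b.2) :=
      key fun p => ψ p.1 p.2
    have hm := hmerge (P i).1 (P i).2 (P j).1 (P j).2
    have ea1 : a.1 = (P i).1 ∪ (P j).1 := rfl
    have ea2 : a.2 = (P i).2 ∪ (P j).2 := rfl
    have eb1 : b.1 = (P i).1 ∩ (P j).1 := rfl
    have eb2 : b.2 = (P i).2 ∩ (P j).2 := rfl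
    rw [ea1, ea2, eb1, eb2] at hsum
    linarith

private lemma pairs_ineq_aux (ψ : Finset 𝒱 → Finset 𝒱 → ℝ)
    (hmerge : ∀ A B A' B' : Finset 𝒱,
      ψ (A ∪ A') (B ∪ B') + ψ (A ∩ A') (B ∩ B') ≤ ψ A B + ψ A' B')
    {l : ℕ} (n : ℕ) :
    ∀ P : Fin l → Finset 𝒱 × Finset 𝒱,
      l * (2 * Fintype.card 𝒱) ^ 2 ≤ (∑ i, ((P i).1.card + (P i).2.card) ^ 2) + n →
      ∑ k ∈ Finset.Icc 1 l,
          ψ (tildeSet (fun i => (P i).1) k) (tildeSet (fun i => (P i).2) k)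
        ≤ ∑ i, ψ (P i).1 (P i).2 := by
  induction n with
  | zero =>
    intro P hP
    by_cases hch : PChain P
    · exact le_of_eq (chain_case ψ P hch)
    · exfalso
      obtain ⟨P', -, -, hpot, -⟩ := descent ψ hmerge P hch
      have := pot_le P'
      omega
  | succ n ih =>
    intro P hP
    by_cases hch : PChain P
    · exact le_of_eq (chain_case ψ P hch)
    · obtain ⟨P', hc1, hc2, hpot, hψle⟩ := descent ψ hmerge P hch
      have ht1 : tildeSet (fun i => (P i).1) = tildeSet (fun i => (P' i).1) :=
        (tildeSet_congr_count (fun v => (hc1 v))).symm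
      have ht2 : tildeSet (fun i => (P i).2) = tildeSet (fun i => (P' i).2) :=
        (tildeSet_congr_count (fun v => (hc2 v))).symm
      rw [ht1, ht2]
      exact le_trans (ih P' (by omega)) hψle

theorem pairs_ineq (ψ : Finset 𝒱 → Finset 𝒱 → ℝ)
    (hmerge : ∀ A B A' B' : Finset 𝒱,
      ψ (A ∪ A') (B ∪ B') + ψ (A ∩ A') (B ∩ B') ≤ ψ A B + ψ A' B')
    {l : ℕ} (P : Fin l → Finset 𝒱 × Finset 𝒱) :
    ∑ k ∈ Finset.Icc 1 l,
        ψ (tildeSet (fun i => (P i).1) k) (tildeSet (fun i => (P i).2) k)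
      ≤ ∑ i, ψ (P i).1 (P i).2 :=
  pairs_ineq_aux ψ hmerge (l * (2 * Fintype.card 𝒱) ^ 2) P (by omega)

end Pairs

/-- **Loop Lemma.** With `ξ` submodular (playing the role of entropy), `h` additive on left
copies (independent inputs), and `ψ A B = ξ(Y_B ∪ X_A) − ∑_{v ∈ A} h v` (the analogue of
`H(Y_B | X_A)`), for pairwise distinct subsets `V_1, …, V_l` of `𝒱 ∖ {S}` each containing `D`,
`ψ(V_1,V_2) + ⋯ + ψ(V_{l-1},V_l) + ψ(V_l,V_1) ≥ ∑_{i=1}^{l} ψ(Ṽ_i, Ṽ_i)`. -/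
theorem loop_lemma {𝒱 : Type*} [Fintype 𝒱] [DecidableEq 𝒱]
    (S D : 𝒱) (hSD : S ≠ D)
    (ξ : Finset (𝒱 ⊕ 𝒱) → ℝ)
    (hsub : ∀ A B : Finset (𝒱 ⊕ 𝒱), ξ (A ∪ B) + ξ (A ∩ B) ≤ ξ A + ξ B)
    (h : 𝒱 → ℝ)
    (hξh : ∀ A : Finset 𝒱, ξ (A.image Sum.inl) = ∑ v ∈ A, h v)
    (ψ : Finset 𝒱 → Finset 𝒱 → ℝ)
    (hψ : ∀ A B : Finset 𝒱,
      ψ A B = ξ (B.image Sum.inr ∪ A.image Sum.inl) - ∑ v ∈ A, h v)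
    {l : ℕ} [NeZero l] (V : Fin l → Finset 𝒱)
    (hdist : Function.Injective V)
    (hD : ∀ i, D ∈ V i) (hS : ∀ i, S ∉ V i) :
    ∑ k ∈ Finset.Icc 1 l, ψ (tildeSet V k) (tildeSet V k)
      ≤ ∑ i : Fin l, ψ (V i) (V (i + 1)) := by
  classical
  have hmerge : ∀ A B A' B' : Finset 𝒱,
      ψ (A ∪ A') (B ∪ B') + ψ (A ∩ A') (B ∩ B') ≤ ψ A B + ψ A' B' := by
    intro A B A' B'
    have key := hsub (B.image Sum.inr ∪ A.image Sum.inl) (B'.image Sum.inr ∪ A'.image Sum.inl)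
    have hu : (B.image Sum.inr ∪ A.image Sum.inl) ∪ (B'.image Sum.inr ∪ A'.image Sum.inl)
        = (B ∪ B').image Sum.inr ∪ (A ∪ A').image Sum.inl := by
      ext x; cases x <;> simp <;> tauto
    have hi : (B.image Sum.inr ∪ A.image Sum.inl) ∩ (B'.image Sum.inr ∪ A'.image Sum.inl)
        = (B ∩ B').image Sum.inr ∪ (A ∩ A').image Sum.inl := by
      ext x; cases x <;> simp <;> tauto
    rw [hu, hi] at key
    have hsumh : (∑ v ∈ A ∪ A', h v) + (∑ v ∈ A ∩ A', h v)
        = (∑ v ∈ A, h v) + (∑ v ∈ A', h v) := Finset.sum_union_inter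
    rw [hψ, hψ, hψ, hψ]
    linarith
  set P : Fin l → Finset 𝒱 × Finset 𝒱 := fun i => (V i, V (i + 1)) with hP
  have h1 : (fun i => (P i).1) = V := rfl
  have h2 : tildeSet (fun i => (P i).2) = tildeSet V := by
    apply tildeSet_congr_count
    intro v
    exact Finset.card_equiv (Equiv.addRight (1 : Fin l)) (by intro i; simp [hP])
  have := pairs_ineq ψ hmerge P
  rw [h1, h2] at this
  exact this
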